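/- Let X be a normal Hausdorff space and f : X → ℝ ∪ {+∞} bounded from below, lower semicontinuous, with nonempty domain. Then for every Q in the weak*-closed convex hull of Δ(X) in (C_b(X))*: F(f)(Q) = sup{Q(φ) : φ ∈ C_b(X), φ ≤ f}, i.e. the second conjugate (f^×)* coincides with the support function of A(f) := {φ ∈ C_b(X) : φ ≤ f} on co̅^{w*}(Δ(X)). -/

import Mathlib

open BoundedContinuousFunction

theorem FTransform_eq_support_function
    {X : Type*} [TopologicalSpace X] [T2Space X] [NormalSpace X]
    (f : X → EReal) (hf : LowerSemicontinuous f)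
    (hbdd : ∃ m : ℝ, ∀ x, (m : EReal) ≤ f x) (hdom : ∃ x, f x ≠ ⊤) :
    ∃ Δ : X → WeakDual ℝ (X →ᵇ ℝ), (∀ (x : X) (φ : X →ᵇ ℝ), Δ x φ = φ x) ∧
      ∀ Q ∈ closure (convexHull ℝ (Set.range Δ)),
        (⨆ φ : X →ᵇ ℝ, ((Q φ : EReal) - ⨆ x : X, ((φ x : EReal) - f x))) =
          ⨆ φ : {φ : X →ᵇ ℝ // ∀ x, ((φ : X →ᵇ ℝ) x : EReal) ≤ f x},
            (Q (φ : X →ᵇ ℝ) : EReal) := by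
  obtain ⟨m, hm⟩ := hbdd
  obtain ⟨x₀, hx₀⟩ := hdom
  refine ⟨fun x => (BoundedContinuousFunction.evalCLM ℝ x : (X →ᵇ ℝ) →L[ℝ] ℝ),
    fun x φ => rfl, ?_⟩
  intro Q hQ
  -- Q 1 = 1
  have hQ1 : Q (1 : X →ᵇ ℝ) = 1 := by
    have hclosed : IsClosed {R : WeakDual ℝ (X →ᵇ ℝ) | R (1 : X →ᵇ ℝ) = 1} :=
      isClosed_eq (WeakDual.eval_continuous (1 : X →ᵇ ℝ)) continuous_const
    have hconv : Convex ℝ {R : WeakDual ℝ (X →ᵇ ℝ) | R (1 : X →ᵇ ℝ) = 1} := by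
      intro R hR S hS a b ha hb hab
      simp only [Set.mem_setOf_eq] at *
      show (a • R + b • S) (1 : X →ᵇ ℝ) = 1
      rw [show (a • R + b • S) (1 : X →ᵇ ℝ) = a * R 1 + b * S 1 from rfl,
        hR, hS, mul_one, mul_one, hab]
    have hsub : Set.range (fun x => (BoundedContinuousFunction.evalCLM ℝ x :
        (X →ᵇ ℝ) →L[ℝ] ℝ)) ⊆ {R : WeakDual ℝ (X →ᵇ ℝ) | R (1 : X →ᵇ ℝ) = 1} := by
      rintro _ ⟨x, rfl⟩
      show (1 : X →ᵇ ℝ) x = 1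
      simp
    exact hclosed.closure_subset_iff.mpr (hconv.convexHull_subset_iff.mpr hsub) hQ
  -- basic facts about S φ := ⨆ x, φ x - f x
  have hfx₀ : f x₀ = ((f x₀).toReal : EReal) :=
    (EReal.coe_toReal hx₀ (ne_bot_of_le_ne_bot (EReal.coe_ne_bot m) (hm x₀))).symm
  set fr : ℝ := (f x₀).toReal with hfr
  have hSlb : ∀ φ : X →ᵇ ℝ, ((φ x₀ - fr : ℝ) : EReal) ≤ ⨆ x : X, ((φ x : EReal) - f x) := by
    intro φ
    refine le_trans (le_of_eq ?_) (le_iSup (fun x => ((φ x : EReal) - f x)) x₀)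
    rw [hfx₀, ← EReal.coe_sub]
  have hSub : ∀ φ : X →ᵇ ℝ, (⨆ x : X, ((φ x : EReal) - f x)) ≤ ((‖φ‖ - m : ℝ) : EReal) := by
    intro φ
    refine iSup_le fun x => ?_
    rw [EReal.coe_sub]
    exact EReal.sub_le_sub (by exact_mod_cast le_trans (le_abs_self _) (φ.norm_coe_le_norm x))
      (hm x)
  have hSreal : ∀ φ : X →ᵇ ℝ, ∃ r : ℝ, (⨆ x : X, ((φ x : EReal) - f x)) = (r : EReal) := by
    intro φ
    refine ⟨(⨆ x : X, ((φ x : EReal) - f x)).toReal, ?_⟩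
    exact (EReal.coe_toReal (ne_top_of_le_ne_top (EReal.coe_ne_top _) (hSub φ))
      (ne_bot_of_le_ne_bot (EReal.coe_ne_bot _) (hSlb φ))).symm
  -- evaluating Q on φ - const r
  have hQconst : ∀ (φ : X →ᵇ ℝ) (r : ℝ), Q (φ - BoundedContinuousFunction.const X r)
      = Q φ - r := by
    intro φ r
    have h1 : BoundedContinuousFunction.const X r = r • (1 : X →ᵇ ℝ) := by
      ext x; simp
    rw [map_sub, h1, map_smul, hQ1]
    simp
  apply le_antisymm
  · refine iSup_le fun φ => ?_
    obtain ⟨r, hr⟩ := hSreal φ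
    -- ψ := φ - r ≤ f
    have hψ : ∀ x, (((φ - BoundedContinuousFunction.const X r) x : ℝ) : EReal) ≤ f x := by
      intro x
      have hx : (φ x : EReal) - f x ≤ (r : EReal) :=
        hr ▸ le_iSup (fun x => ((φ x : EReal) - f x)) x
      by_cases hfx : f x = ⊤
      · simp [hfx]
      · have hfb : f x ≠ ⊥ := ne_bot_of_le_ne_bot (EReal.coe_ne_bot m) (hm x)
        have : f x = ((f x).toReal : EReal) := (EReal.coe_toReal hfx hfb).symm
        rw [this] at hx ⊢
        rw [← EReal.coe_sub] at hx
        have : φ x - (f x).toReal ≤ r := by exact_mod_cast hx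
        simp only [BoundedContinuousFunction.coe_sub, BoundedContinuousFunction.const_apply,
          Pi.sub_apply]
        exact_mod_cast by linarith
    have hle : (Q φ : EReal) - (⨆ x : X, ((φ x : EReal) - f x))
        = ((Q (φ - BoundedContinuousFunction.const X r) : ℝ) : EReal) := by
      rw [hr, hQconst, EReal.coe_sub]
    rw [hle]
    exact le_iSup (fun ψ : {ψ : X →ᵇ ℝ // ∀ x, ((ψ : X →ᵇ ℝ) x : EReal) ≤ f x} =>
      ((Q (ψ : X →ᵇ ℝ) : ℝ) : EReal)) ⟨φ - BoundedContinuousFunction.const X r, hψ⟩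
  · refine iSup_le fun ψ => ?_
    obtain ⟨φ, hφ⟩ := ψ
    obtain ⟨r, hr⟩ := hSreal φ
    have hrle : r ≤ 0 := by
      have : (⨆ x : X, ((φ x : EReal) - f x)) ≤ (0 : EReal) := by
        refine iSup_le fun x => ?_
        calc (φ x : EReal) - f x ≤ (φ x : EReal) - (φ x : EReal) :=
              EReal.sub_le_sub le_rfl (hφ x)
          _ = 0 := by rw [← EReal.coe_sub]; simp
      rw [hr] at this
      exact_mod_cast this
    have key : ((Q φ : ℝ) : EReal) ≤ (Q φ : EReal) - (⨆ x : X, ((φ x : EReal) - f x)) := by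
      rw [hr, ← EReal.coe_sub]
      exact_mod_cast by linarith
    exact le_trans key (le_iSup (fun φ : X →ᵇ ℝ =>
      (Q φ : EReal) - ⨆ x : X, ((φ x : EReal) - f x)) φ)
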